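/- Let m ≥ 1 be a natural number and assume a ≠ 0 (so that L ≠ 0). For every real t, ∏_{j=0}^{2m−1} |sin_λ(t + jπ/(2m·L) : a)| = |sin_λ(2m·t : a)| / 2^{2m−1}. -/

import Mathlib

open Real

private lemma aux_prod_X_sub (n : ℕ) (hn : 0 < n) (ω : ℂ) (hω : IsPrimitiveRoot ω n)
    (x : ℂ) : ∏ j ∈ Finset.range n, (x - ω ^ j) = x ^ n - 1 := by
  haveI : NeZero n := ⟨hn.ne'⟩
  have h := congrArg (Polynomial.eval x) (Polynomial.X_pow_sub_one_eq_prod hn hω)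
  rw [Polynomial.eval_prod] at h
  simp only [Polynomial.eval_sub, Polynomial.eval_pow, Polynomial.eval_X,
    Polynomial.eval_one, Polynomial.eval_C] at h
  rw [h]
  refine Finset.prod_bij (fun j _ => ω ^ j) ?_ ?_ ?_ ?_
  · intro j hj
    exact (Polynomial.mem_nthRootsFinset hn 1).2 (by
      rw [← pow_mul, mul_comm, pow_mul, hω.pow_eq_one, one_pow])
  · intro i hi j hj hij
    exact hω.injOn_pow (by simpa using hi) (by simpa using hj) hij
  · intro ζ hζ
    obtain ⟨i, hi, rfl⟩ := hω.eq_pow_of_pow_eq_one ((Polynomial.mem_nthRootsFinset hn 1).1 hζ)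
    exact ⟨i, Finset.mem_range.mpr hi, rfl⟩
  · intro j hj; rfl

private lemma aux_prod_one_sub (n : ℕ) (hn : 0 < n) (ω : ℂ) (hω : IsPrimitiveRoot ω n)
    (z : ℂ) (hz : z ≠ 0) : ∏ j ∈ Finset.range n, (1 - z * ω ^ j) = 1 - z ^ n := by
  have h1 : ∀ j ∈ Finset.range n, (1 - z * ω ^ j) = z * (z⁻¹ - ω ^ j) := by
    intro j _; field_simp
  rw [Finset.prod_congr rfl h1, Finset.prod_mul_distrib, Finset.prod_const,
    Finset.card_range, aux_prod_X_sub n hn ω hω, inv_pow]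
  field_simp

private lemma aux_prod_sin (n : ℕ) (hn : 0 < n) (x : ℝ) :
    ∏ j ∈ Finset.range n, Real.sin (x + j * π / n) = Real.sin (n * x) / 2 ^ (n - 1) := by
  have hn' : (n : ℝ) ≠ 0 := Nat.cast_ne_zero.mpr hn.ne'
  apply Complex.ofReal_injective
  push_cast [Complex.ofReal_sin]
  set I := Complex.I
  have hsin : ∀ θ : ℂ, Complex.sin θ
      = Complex.exp (-θ * I) * (1 - Complex.exp (2 * θ * I)) * I / 2 := by
    intro θ
    rw [Complex.sin]
    rw [show (2 : ℂ) * θ * I = θ * I - (-θ * I) by ring, Complex.exp_sub]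
    field_simp [Complex.exp_ne_zero]
    rfl
  calc ∏ j ∈ Finset.range n, Complex.sin ((x : ℂ) + j * π / n)
      = ∏ j ∈ Finset.range n, (Complex.exp (-((x : ℂ) + j * π / n) * I)
          * (1 - Complex.exp (2 * ((x : ℂ) + j * π / n) * I)) * I / 2) := by
        exact Finset.prod_congr rfl fun j _ => hsin _
    _ = (∏ j ∈ Finset.range n, Complex.exp (-((x : ℂ) + j * π / n) * I))
          * (∏ j ∈ Finset.range n, (1 - Complex.exp (2 * ((x : ℂ) + j * π / n) * I)))
          * (I / 2) ^ n := by
        have hc : (I / 2 : ℂ) ^ n = ∏ _j ∈ Finset.range n, (I / 2 : ℂ) := by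
          rw [Finset.prod_const, Finset.card_range]
        rw [hc, ← Finset.prod_mul_distrib, ← Finset.prod_mul_distrib]
        exact Finset.prod_congr rfl fun j _ => by ring
    _ = Complex.exp (∑ j ∈ Finset.range n, (-((x : ℂ) + j * π / n) * I))
          * (∏ j ∈ Finset.range n, (1 - Complex.exp (2 * (x:ℂ) * I)
              * Complex.exp (2 * Real.pi * I / n) ^ j))
          * (I / 2) ^ n := by
        rw [Complex.exp_sum]
        congr 1; congr 1
        refine Finset.prod_congr rfl fun j _ => ?_
        rw [← Complex.exp_nat_mul, ← Complex.exp_add]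
        congr 1
        push_cast
        field_simp
    _ = Complex.exp (∑ j ∈ Finset.range n, (-((x : ℂ) + j * π / n) * I))
          * (1 - Complex.exp (2 * (x:ℂ) * I) ^ n) * (I / 2) ^ n := by
        rw [aux_prod_one_sub n hn _ (Complex.isPrimitiveRoot_exp n hn.ne') _
          (Complex.exp_ne_zero _)]
    _ = Real.sin (n * x) / 2 ^ (n - 1) := ?_
  -- compute the sum in the exponential
  have hsum : ∑ j ∈ Finset.range n, (-((x : ℂ) + j * π / n) * I)
      = -(n * x * I) - (n - 1) * π * I / 2 := by
    have hgauss : ∑ j ∈ Finset.range n, (j : ℂ) = n * (n - 1) / 2 := by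
      have := Finset.sum_range_id_mul_two n
      have h2 : ((∑ j ∈ Finset.range n, j) * 2 : ℕ) = (n * (n-1) : ℕ) := this
      have := congrArg (Nat.cast : ℕ → ℂ) h2
      push_cast [Nat.cast_sub hn] at this
      linear_combination this / 2
    have e : ∀ j ∈ Finset.range n, -((x:ℂ) + ↑j * ↑π / ↑n) * I
        = -((x:ℂ) * I) + (j:ℂ) * (-((π:ℂ) / n * I)) := fun j _ => by ring
    rw [Finset.sum_congr rfl e, Finset.sum_add_distrib, Finset.sum_const, Finset.card_range,
      ← Finset.sum_mul, hgauss]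
    have hnc : (n:ℂ) ≠ 0 := Nat.cast_ne_zero.mpr hn.ne'
    field_simp
    ring
  rw [hsum]
  -- now pure exponential algebra
  have hexp2 : Complex.exp (2 * (x:ℂ) * I) ^ n = Complex.exp (2 * n * x * I) := by
    rw [← Complex.exp_nat_mul]; ring_nf
  rw [hexp2, Complex.exp_sub]
  have hI : Complex.exp ((n - 1 : ℂ) * π * I / 2) = I ^ (n - 1) := by
    have : ((n : ℂ) - 1) = ((n - 1 : ℕ) : ℂ) := by push_cast [Nat.cast_sub hn]; ring
    rw [this, show (((n-1 : ℕ) : ℂ)) * π * I / 2 = (n-1 : ℕ) * (π * I / 2) by ring,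
      Complex.exp_nat_mul]
    congr 1
    rw [show (π : ℂ) * I / 2 = π / 2 * I by ring, Complex.exp_mul_I]
    simp
    rfl
  rw [hI]
  have hsin' : Complex.sin ((n : ℂ) * x)
      = Complex.exp (-(n * (x:ℂ) * I)) * (1 - Complex.exp (2 * n * x * I)) * I / 2 := by
    rw [hsin ((n : ℂ) * x)]; ring_nf
  have hcoe : ((Real.sin (n * x) : ℝ) : ℂ) = Complex.sin ((n : ℂ) * x) := by
    rw [Complex.ofReal_sin]; norm_cast
  rw [hcoe, hsin']
  have hIn : (I:ℂ) ^ n = I ^ (n - 1) * I := by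
    conv_lhs => rw [show n = (n - 1) + 1 by omega]
    rw [pow_succ]
  have hInz : (I : ℂ) ^ (n - 1) ≠ 0 := pow_ne_zero _ Complex.I_ne_zero
  have h2n : (2 : ℂ) ^ n = 2 ^ (n - 1) * 2 := by
    conv_lhs => rw [show n = (n - 1) + 1 by omega]
    rw [pow_succ]
  rw [div_pow, hIn, h2n]
  have hI2 : (I : ℂ) * I = -1 := Complex.I_mul_I
  field_simp
  ring_nf
  rw [Complex.ofReal_sin]
  norm_cast
  ring

/-- ∏_{j=0}^{2m−1} |sin_λ(t + jπ/(2m·L) : a)| = |sin_λ(2m·t : a)| / 2^(2m−1). -/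
theorem degenerate_prod_abs_sin (lam a : ℝ) (hlam : lam ≠ 0)
    (ha : 1 + lam * a > 0) (haz : a ≠ 0) (L : ℝ)
    (hL : L = lam⁻¹ * Real.log (1 + lam * a)) (m : ℕ) (hm : 1 ≤ m) (t : ℝ) :
    ∏ j ∈ Finset.range (2 * m), |Real.sin ((t + j * π / (2 * m * L)) * L)|
      = |Real.sin (2 * m * t * L)| / 2 ^ (2 * m - 1) := by
  have hLne : L ≠ 0 := by
    rw [hL]
    refine mul_ne_zero (inv_ne_zero hlam) ?_
    intro h
    have hla : lam * a ≠ 0 := mul_ne_zero hlam haz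
    rcases Real.log_eq_zero.mp h with h1 | h1 | h1
    · linarith
    · exact hla (by linarith)
    · linarith
  have hn : 0 < 2 * m := by omega
  have hn' : ((2 * m : ℕ) : ℝ) ≠ 0 := Nat.cast_ne_zero.mpr hn.ne'
  have key := aux_prod_sin (2 * m) hn (t * L)
  have harg : ∀ j : ℕ, (t + j * π / (2 * m * L)) * L = t * L + j * π / (2 * m) := by
    intro j
    have : ((2 * m : ℕ) : ℝ) = 2 * m := by push_cast; ring
    field_simp
  calc ∏ j ∈ Finset.range (2 * m), |Real.sin ((t + j * π / (2 * m * L)) * L)|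
      = |∏ j ∈ Finset.range (2 * m), Real.sin (t * L + j * π / (2 * m))| := by
        rw [Finset.abs_prod]
        refine Finset.prod_congr rfl fun j _ => ?_
        rw [harg j]
    _ = |Real.sin ((2 * m : ℕ) * (t * L)) / 2 ^ (2 * m - 1)| := by
        rw [← key]
        congr 1
        refine Finset.prod_congr rfl fun j _ => ?_
        push_cast
        try ring_nf
    _ = |Real.sin (2 * m * t * L)| / 2 ^ (2 * m - 1) := by
        rw [abs_div]
        congr 1
        · congr 1; push_cast; ring
        · rw [abs_of_pos]; positivity
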